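/- arXiv:0906.0377 — 2 statements merged into one kernel-verified Lean document; each statement's English description precedes it below -/
import Mathlib

section
/- Let r ∈ [n] and let θ be a word consisting of the n−1 elements of [n]\{r} in some order. Then Σ_{i=1}^{n} q^{maj(θ_i^r)} = (1 + q + q^2 + ... + q^{n−1}) · q^{maj(θ)}, as an identity of polynomials in q. -/
open Polynomial

/-- The word (1, 2, ..., n) as a list of integers. -/
def W (n : ℕ) : List ℤ := (List.range n).map (fun i => (i : ℤ) + 1)

/-- Descent set of a word: 1-based indices i ∈ {1,...,m-1} with w(i) > w(i+1). -/
def descSet (w : List ℤ) : Finset ℕ :=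
  (Finset.Icc 1 (w.length - 1)).filter (fun i => w.getD (i - 1) 0 > w.getD i 0)

/-- Major index of a word: the sum of its descents. -/
def maj (w : List ℤ) : ℕ := ∑ i ∈ descSet w, i

/-- `dstat w k` is the number of descents of `w` that are ≥ k. -/
def dstat (w : List ℤ) (k : ℕ) : ℕ := ((descSet w).filter (fun i => k ≤ i)).card

/-- Major increment: the change in major index when `r` is inserted into `w`
at (1-based) position `k`. -/
def mi (w : List ℤ) (k : ℕ) (r : ℤ) : ℤ := (maj (w.insertIdx (k - 1) r) : ℤ) - (maj w : ℤ)

/-- The q-factorial [m]_q! = ∏_{i=1}^m (1 + q + ... + q^{i-1}), as a polynomial in q. -/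
noncomputable def qFact (m : ℕ) : Polynomial ℚ :=
  ∏ i ∈ Finset.range m, ∑ j ∈ Finset.range (i + 1), (X : Polynomial ℚ) ^ j

/-- The q-binomial coefficient [n choose a]_q = [n]_q!/([a]_q!·[n−a]_q!). -/
noncomputable def qBinom (n a : ℕ) : Polynomial ℚ := qFact n / (qFact a * qFact (n - a))

/-- The set of all shuffles of two words `θ` and `π` (words containing `θ` and `π`
as complementary subwords). -/
def shuffles (θ π : List ℤ) : Finset (List ℤ) :=
  (θ ++ π).permutations.toFinset.filter (fun σ => θ.Sublist σ ∧ π.Sublist σ)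

/- ### Auxiliary lemmas -/

lemma W_eq (n : ℕ) : W n = (List.range n).map (fun i : ℕ => ((i : ℤ) + 1)) := by
  simp [W, List.flatMap_def, List.pure_def, Function.comp_def, List.map_map]
  induction List.range n with
  | nil => rfl
  | cons a l ih => simp [ih]

lemma maj_singleton (x : ℤ) : maj [x] = 0 := by simp [maj, descSet]

lemma maj_pair (a b : ℤ) : maj [a, b] = if b < a then 1 else 0 := by
  simp only [maj, descSet]
  norm_num [Finset.Icc_self, Finset.filter_singleton]
  split_ifs <;> simp_all

lemma insertIdx_append_singleton (r x : ℤ) : ∀ (w : List ℤ) (j : ℕ), j ≤ w.length →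
    (w ++ [x]).insertIdx j r = (w.insertIdx j r) ++ [x]
  | _, 0, _ => rfl
  | [], j+1, h => absurd h (by simp)
  | a :: w, j+1, h => by
    simp only [List.cons_append, List.insertIdx_succ_cons,
      insertIdx_append_singleton r x w j (by simpa using h)]

lemma maj_concat (w : List ℤ) (x : ℤ) (hw : w ≠ []) :
    maj (w ++ [x]) = maj w + (if x < w.getD (w.length - 1) 0 then w.length else 0) := by
  have hl : 1 ≤ w.length := List.length_pos_iff.mpr hw
  have hlen : (w ++ [x]).length - 1 = w.length := by simp
  have hIcc : Finset.Icc 1 w.length = insert w.length (Finset.Icc 1 (w.length - 1)) := by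
    ext i; simp only [Finset.mem_Icc, Finset.mem_insert]; omega
  have hmem : w.length ∉ Finset.Icc 1 (w.length - 1) := by simp; omega
  have hg1 : ∀ k, k < w.length → (w ++ [x]).getD k 0 = w.getD k 0 := by
    intro k hk
    rw [List.getD_eq_getElem _ _ (by simp; omega), List.getD_eq_getElem _ _ hk]
    exact List.getElem_append_left hk
  have hg2 : (w ++ [x]).getD w.length 0 = x := by
    rw [List.getD_eq_getElem _ _ (by simp)]; simp
  unfold maj descSet
  rw [hlen, hIcc, Finset.filter_insert]
  rw [Finset.filter_congr (fun i hi => by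
    simp only [Finset.mem_Icc] at hi
    rw [hg1 _ (by omega), hg1 _ (by omega)])]
  rw [hg1 _ (by omega), hg2]
  split_ifs with h
  · rw [Finset.sum_insert (fun hmem' => hmem (Finset.mem_filter.mp hmem').1)]
    omega
  · omega

lemma getD_concat_last (w : List ℤ) (x : ℤ) : (w ++ [x]).getD w.length 0 = x := by
  rw [List.getD_eq_getElem _ _ (by simp)]; simp

lemma getD_insertIdx_last (w : List ℤ) (r : ℤ) (j : ℕ) (hj : j < w.length) :
    (w.insertIdx j r).getD w.length 0 = w.getD (w.length - 1) 0 := by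
  have hlen : (w.insertIdx j r).length = w.length + 1 := List.length_insertIdx_of_le_length hj.le r
  rw [List.getD_eq_getElem _ _ (by omega), List.getD_eq_getElem _ _ (by omega)]
  have h := List.getElem_insertIdx_add_succ w r j (w.length - 1 - j) (by omega)
  have e1 : j + (w.length - 1 - j) = w.length - 1 := by omega
  have e3 : w.length - 1 + 1 = w.length := by omega
  simp only [e1, e3] at h
  exact h

/-- Key lemma: summing `q^maj` over all insertions of a new letter `r` into `θ`
multiplies `q^(maj θ)` by `1 + q + ⋯ + q^(length θ)`. -/
lemma key (r : ℤ) (θ : List ℤ) (hr : r ∉ θ) :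
    ∑ j ∈ Finset.range (θ.length + 1), (X : Polynomial ℚ) ^ maj (θ.insertIdx j r) =
      (∑ j ∈ Finset.range (θ.length + 1), (X : Polynomial ℚ) ^ j) * X ^ maj θ := by
  induction θ using List.reverseRecOn with
  | nil => simp [maj_singleton, maj, descSet]
  | append_singleton w x IH =>
    have hrx : r ≠ x := by simp only [List.mem_append, List.mem_singleton] at hr; tauto
    have hrw : r ∉ w := by simp only [List.mem_append, List.mem_singleton] at hr; tauto
    rcases eq_or_ne w [] with rfl | hw
    · -- θ = [x]
      simp only [List.nil_append, List.length_singleton]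
      have i0 : ([x] : List ℤ).insertIdx 0 r = [r, x] := rfl
      have i1 : ([x] : List ℤ).insertIdx 1 r = [x, r] := rfl
      rcases lt_trichotomy r x with h | h | h
      · simp only [Finset.sum_range_succ, Finset.sum_range_zero, i0, i1, maj_pair,
          maj_singleton, if_pos h, if_neg (by omega : ¬ x < r)]
        ring
      · exact absurd h hrx
      · simp only [Finset.sum_range_succ, Finset.sum_range_zero, i0, i1, maj_pair,
          maj_singleton, if_pos h, if_neg (by omega : ¬ r < x)]
        ring
    · have hm1 : 1 ≤ w.length := List.length_pos_iff.mpr hw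
      have hlen : (w ++ [x]).length = w.length + 1 := by simp
      rw [hlen, Finset.sum_range_succ, Finset.sum_range_succ]
      -- top two terms
      have t1 : (w ++ [x]).insertIdx (w.length + 1) r = (w ++ [x]) ++ [r] := by
        rw [show w.length + 1 = (w ++ [x]).length from hlen.symm, List.insertIdx_length_self]
      have t2 : (w ++ [x]).insertIdx w.length r = (w ++ [r]) ++ [x] := by
        rw [insertIdx_append_singleton r x w w.length le_rfl, List.insertIdx_length_self]
      rw [t1, t2]
      -- terms j < w.length
      have t3 : ∀ j ∈ Finset.range w.length, maj ((w ++ [x]).insertIdx j r)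
          = maj (w.insertIdx j r) +
            (if x < w.getD (w.length - 1) 0 then w.length + 1 else 0) := by
        intro j hj
        rw [Finset.mem_range] at hj
        have hlen2 : (w.insertIdx j r).length = w.length + 1 :=
          List.length_insertIdx_of_le_length hj.le r
        have hne : w.insertIdx j r ≠ [] := by
          intro h; rw [h] at hlen2; simp at hlen2
        rw [insertIdx_append_singleton r x w j hj.le, maj_concat _ _ hne, hlen2,
          Nat.add_sub_cancel, getD_insertIdx_last w r j hj]
      rw [Finset.sum_congr rfl (fun j hj => by rw [t3 j hj])]
      -- expand the maj's of concatenations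
      have e1 : maj (w ++ [x]) = maj w + (if x < w.getD (w.length - 1) 0 then w.length else 0) :=
        maj_concat w x hw
      have e2 : maj (w ++ [r]) = maj w + (if r < w.getD (w.length - 1) 0 then w.length else 0) :=
        maj_concat w r hw
      have e3 : maj ((w ++ [r]) ++ [x]) = maj (w ++ [r]) + (if x < r then w.length + 1 else 0) := by
        rw [maj_concat (w ++ [r]) x (by simp)]
        congr 1
        have l1 : (w ++ [r]).length = w.length + 1 := by simp
        rw [l1, Nat.add_sub_cancel, getD_concat_last]
      have e4 : maj ((w ++ [x]) ++ [r]) = maj (w ++ [x]) + (if r < x then w.length + 1 else 0) := by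
        rw [maj_concat (w ++ [x]) r (by simp)]
        congr 1
        rw [hlen, Nat.add_sub_cancel, getD_concat_last]
      rw [e3, e4, e2, e1]
      -- handle the partial sum via the induction hypothesis
      have sum_split : ∑ j ∈ Finset.range w.length,
          (X : Polynomial ℚ) ^ (maj (w.insertIdx j r) +
            (if x < w.getD (w.length - 1) 0 then w.length + 1 else 0))
          = ((∑ j ∈ Finset.range (w.length + 1), (X : Polynomial ℚ) ^ j) * X ^ maj w
              - X ^ (maj w + (if r < w.getD (w.length - 1) 0 then w.length else 0)))
            * X ^ (if x < w.getD (w.length - 1) 0 then w.length + 1 else 0) := by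
        have hIH := IH hrw
        rw [Finset.sum_range_succ, List.insertIdx_length_self, e2] at hIH
        rw [Finset.sum_congr rfl (fun j _ => pow_add X _ _), ← Finset.sum_mul,
          eq_sub_of_add_eq hIH]
      rw [sum_split]
      -- pure algebra from here on
      have hS2 : ∑ j ∈ Finset.range (w.length + 1 + 1), (X : Polynomial ℚ) ^ j
          = (∑ j ∈ Finset.range (w.length + 1), (X : Polynomial ℚ) ^ j) + X ^ (w.length + 1) :=
        Finset.sum_range_succ _ _
      have hgeom : X * (∑ j ∈ Finset.range (w.length + 1), (X : Polynomial ℚ) ^ j) + 1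
          = (∑ j ∈ Finset.range (w.length + 1), (X : Polynomial ℚ) ^ j) + X ^ (w.length + 1) :=
        geom_sum_succ.symm.trans (Finset.sum_range_succ _ _)
      rw [hS2]
      split_ifs <;>
        first
          | ring1
          | linear_combination ((X : Polynomial ℚ)) ^ (maj w + w.length) * hgeom
          | (exfalso; omega)

/-- Theorem 1.1, case a = 1: if r ∈ [n] and θ is a word on [n]\{r}, then
Σ_{i=1}^n q^(maj θᵢʳ) = (1 + q + ... + q^{n-1}) · q^(maj θ). -/
theorem major_index_single_insertion (n : ℕ) (r : ℤ) (hr : r ∈ W n) (θ : List ℤ)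
    (hθ : θ.Perm ((W n).erase r)) :
    ∑ i ∈ Finset.Icc 1 n, (X : Polynomial ℚ) ^ (maj (θ.insertIdx (i - 1) r)) =
      (∑ j ∈ Finset.range n, (X : Polynomial ℚ) ^ j) * (X : Polynomial ℚ) ^ (maj θ) := by
  have hn : 1 ≤ n := by
    rcases Nat.eq_zero_or_pos n with rfl | h
    · rw [W_eq] at hr; simp at hr
    · exact h
  have hlenθ : θ.length = n - 1 := by
    rw [hθ.length_eq]
    have := List.length_erase_add_one hr
    have hWlen : (W n).length = n := by rw [W_eq, List.length_map, List.length_range]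
    omega
  have hnd : (W n).Nodup := by
    rw [W_eq]
    refine List.Nodup.map ?_ List.nodup_range
    intro a b h
    simp only [add_left_inj, Nat.cast_inj] at h
    exact h
  have hrθ : r ∉ θ := by
    intro h
    exact hnd.not_mem_erase (hθ.mem_iff.mp h)
  have hkey := key r θ hrθ
  rw [hlenθ, show n - 1 + 1 = n from by omega] at hkey
  rw [← hkey]
  have hIcc : Finset.Icc 1 n = Finset.image (· + 1) (Finset.range n) := by
    ext i; simp only [Finset.mem_Icc, Finset.mem_image, Finset.mem_range]
    constructor
    · intro ⟨h1, h2⟩; exact ⟨i - 1, by omega, by omega⟩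
    · rintro ⟨j, hj, rfl⟩; omega
  rw [hIcc, Finset.sum_image (by intro a _ b _ h; simp only at h; omega)]
  exact Finset.sum_congr rfl (fun j _ => by rw [Nat.add_sub_cancel])
end

section
/- Let σ be a word of n−1 distinct integers and let r be an integer less than every letter of σ. Then for every k with 1 ≤ k ≤ n−1, the set of the first k entries of MIS(σ,r), i.e., {mi(σ,1,r), ..., mi(σ,k,r)}, equals the integer interval {d_k(σ), d_k(σ)+1, ..., d_k(σ)+k−1}. -/
open Polynomial

lemma getD_insertIdx' (σ : List ℤ) (r : ℤ) (p : ℕ) (hp : p ≤ σ.length) (i : ℕ) :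
    (σ.insertIdx p r).getD i 0 =
      if i < p then σ.getD i 0 else if i = p then r else σ.getD (i - 1) 0 := by
  have hlen : (σ.insertIdx p r).length = σ.length + 1 := List.length_insertIdx_of_le_length hp r
  split_ifs with h1 h2
  · have hi : i < σ.length := lt_of_lt_of_le h1 hp
    rw [List.getD_eq_getElem _ _ (by omega), List.getD_eq_getElem _ _ hi]
    exact List.getElem_insertIdx_of_lt h1 _
  · subst h2
    rw [List.getD_eq_getElem _ _ (by omega)]
    exact List.getElem_insertIdx_self _
  · have hip : p < i := by omega
    by_cases hh : i - 1 < σ.length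
    · rw [List.getD_eq_getElem _ _ (by omega), List.getD_eq_getElem _ _ hh]
      have h := List.getElem_insertIdx_add_succ σ r p (i - p - 1) (by omega) (by omega)
      have he2 : p + (i - p - 1) = i - 1 := by omega
      simp only [he2, show i - 1 + 1 = i from by omega] at h
      exact h
    · rw [List.getD_eq_default _ _ (by omega), List.getD_eq_default _ _ (by omega)]

lemma mem_descSet {w : List ℤ} {i : ℕ} :
    i ∈ descSet w ↔ (1 ≤ i ∧ i ≤ w.length - 1) ∧ w.getD (i - 1) 0 > w.getD i 0 := by
  simp [descSet, Finset.mem_filter, Finset.mem_Icc]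

lemma r_lt_getD (σ : List ℤ) (r : ℤ) (hr : ∀ x ∈ σ, r < x) {j : ℕ} (hj : j < σ.length) :
    r < σ.getD j 0 := by
  rw [List.getD_eq_getElem _ _ hj]
  exact hr _ (σ.getElem_mem hj)

lemma descSet_insertIdx (σ : List ℤ) (r : ℤ) (hr : ∀ x ∈ σ, r < x) (p : ℕ)
    (hp : p + 1 ≤ σ.length) :
    descSet (σ.insertIdx p r) =
      (((descSet σ).filter (fun i => i < p)) ∪
        (((descSet σ).filter (fun i => p < i)).image (fun i => i + 1))) ∪
      (if p = 0 then (∅ : Finset ℕ) else {p}) := by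
  have hlen2 : (σ.insertIdx p r).length = σ.length + 1 := List.length_insertIdx_of_le_length (by omega) r
  ext i
  simp only [mem_descSet, hlen2, Finset.mem_union, Finset.mem_filter, Finset.mem_image,
    Nat.add_sub_cancel]
  rw [getD_insertIdx' σ r p (by omega) (i - 1), getD_insertIdx' σ r p (by omega) i]
  constructor
  · rintro ⟨⟨hi1, hi2⟩, hgt⟩
    rcases Nat.lt_trichotomy i p with h | h | h
    · left; left
      rw [if_pos (by omega), if_pos h] at hgt
      exact ⟨⟨⟨hi1, by omega⟩, hgt⟩, h⟩
    · right
      subst h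
      simp only [if_neg (show ¬ i = 0 by omega), Finset.mem_singleton]
    · by_cases h1 : i = p + 1
      · exfalso
        rw [if_neg (by omega), if_pos (by omega), if_neg (by omega), if_neg (by omega)] at hgt
        have := r_lt_getD σ r hr (show i - 1 < σ.length by omega)
        linarith
      · left; right
        rw [if_neg (by omega), if_neg (by omega), if_neg (by omega), if_neg (by omega)] at hgt
        refine ⟨i - 1, ⟨⟨⟨by omega, by omega⟩, ?_⟩, by omega⟩, by omega⟩
        exact hgt
  · rintro ((⟨⟨⟨h1, h2⟩, hgt⟩, hlt⟩ | ⟨j, ⟨⟨⟨h1, h2⟩, hgt⟩, hj⟩, hji⟩) | hmem)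
    · refine ⟨⟨h1, by omega⟩, ?_⟩
      rw [if_pos (by omega), if_pos hlt]
      exact hgt
    · refine ⟨⟨by omega, by omega⟩, ?_⟩
      rw [if_neg (by omega), if_neg (by omega), if_neg (by omega), if_neg (by omega)]
      have e1 : i - 1 - 1 = j - 1 := by omega
      have e2 : i - 1 = j := by omega
      rw [e1, e2]
      exact hgt
    · by_cases hp0 : p = 0
      · simp [hp0] at hmem
      · rw [if_neg hp0, Finset.mem_singleton] at hmem
        subst hmem
        refine ⟨⟨by omega, by omega⟩, ?_⟩
        rw [if_pos (by omega), if_neg (by omega), if_pos rfl]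
        exact r_lt_getD σ r hr (show i - 1 < σ.length by omega)

lemma maj_insertIdx (σ : List ℤ) (r : ℤ) (hr : ∀ x ∈ σ, r < x) (p : ℕ)
    (hp : p + 1 ≤ σ.length) :
    maj (σ.insertIdx p r) + (if p ∈ descSet σ then p else 0) = maj σ + p + dstat σ (p + 1) := by
  classical
  unfold maj
  rw [descSet_insertIdx σ r hr p hp]
  have hAB : Disjoint ((descSet σ).filter (fun i => i < p))
      (((descSet σ).filter (fun i => p < i)).image (fun i => i + 1)) := by
    rw [Finset.disjoint_left]
    rintro a ha hb
    simp only [Finset.mem_filter, Finset.mem_image] at ha hb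
    obtain ⟨j, ⟨_, hj⟩, hji⟩ := hb
    omega
  have hC : Disjoint
      (((descSet σ).filter (fun i => i < p)) ∪
        (((descSet σ).filter (fun i => p < i)).image (fun i => i + 1)))
      (if p = 0 then (∅ : Finset ℕ) else ({p} : Finset ℕ)) := by
    rw [Finset.disjoint_right]
    rintro a ha hb
    by_cases hp0 : p = 0
    · simp [hp0] at ha
    · rw [if_neg hp0, Finset.mem_singleton] at ha
      subst ha
      simp only [Finset.mem_union, Finset.mem_filter, Finset.mem_image] at hb
      rcases hb with ⟨_, h⟩ | ⟨j, ⟨_, hj⟩, hji⟩ <;> omega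
  rw [Finset.sum_union hC, Finset.sum_union hAB]
  have himg : ∑ i ∈ ((descSet σ).filter (fun i => p < i)).image (fun i => i + 1), i =
      (∑ i ∈ (descSet σ).filter (fun i => p < i), i) +
        ((descSet σ).filter (fun i => p < i)).card := by
    rw [Finset.sum_image (by intro a _ b _ h; simp only at h; omega)]
    rw [Finset.sum_add_distrib, Finset.sum_const, smul_eq_mul, mul_one]
  have hite : (∑ i ∈ (if p = 0 then (∅ : Finset ℕ) else ({p} : Finset ℕ)), i) = p := by
    split_ifs with h
    · simp [h]
    · simp
  have hsplit : (∑ i ∈ (descSet σ).filter (fun i => i < p), i) +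
      (if p ∈ descSet σ then p else 0) +
      (∑ i ∈ (descSet σ).filter (fun i => p < i), i) = ∑ i ∈ descSet σ, i := by
    rw [← Finset.sum_filter_add_sum_filter_not (descSet σ) (fun i => p < i)]
    have hle : (descSet σ).filter (fun i => ¬ p < i) = (descSet σ).filter (fun i => i ≤ p) := by
      apply Finset.filter_congr; intro x _; simp
    by_cases hpD : p ∈ descSet σ
    · have : (descSet σ).filter (fun i => i ≤ p) =
          insert p ((descSet σ).filter (fun i => i < p)) := by
        ext x
        simp only [Finset.mem_filter, Finset.mem_insert]
        constructor
        · rintro ⟨hx, hxp⟩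
          rcases eq_or_lt_of_le hxp with h | h
          · exact Or.inl h
          · exact Or.inr ⟨hx, h⟩
        · rintro (rfl | ⟨hx, hxp⟩)
          · exact ⟨hpD, le_refl _⟩
          · exact ⟨hx, le_of_lt hxp⟩
      rw [if_pos hpD, hle, this, Finset.sum_insert (by simp)]
      ring
    · have : (descSet σ).filter (fun i => i ≤ p) = (descSet σ).filter (fun i => i < p) := by
        ext x
        simp only [Finset.mem_filter]
        constructor
        · rintro ⟨hx, hxp⟩
          refine ⟨hx, ?_⟩
          rcases eq_or_lt_of_le hxp with h | h
          · exact absurd (h ▸ hx) hpD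
          · exact h
        · rintro ⟨hx, hxp⟩
          exact ⟨hx, le_of_lt hxp⟩
      rw [if_neg hpD, hle, this]
      ring
  have hdst : ((descSet σ).filter (fun i => p < i)).card = dstat σ (p + 1) := by
    unfold dstat
    congr 1
  rw [himg, hite, ← hsplit, hdst]
  ring

lemma mi_formula (σ : List ℤ) (r : ℤ) (hr : ∀ x ∈ σ, r < x) (j : ℕ)
    (hj1 : 1 ≤ j) (hj : j ≤ σ.length) :
    mi σ j r = (dstat σ j : ℤ) + (if (j - 1) ∈ descSet σ then 0 else ((j : ℤ) - 1)) := by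
  unfold mi
  have h := maj_insertIdx σ r hr (j - 1) (by omega)
  have hjj : j - 1 + 1 = j := by omega
  rw [hjj] at h
  by_cases hd : (j - 1) ∈ descSet σ
  · rw [if_pos hd] at h ⊢
    have : (maj (σ.insertIdx (j - 1) r) : ℤ) + (j - 1 : ℕ) =
        (maj σ : ℤ) + (j - 1 : ℕ) + (dstat σ j : ℤ) := by exact_mod_cast congrArg (Nat.cast (R := ℤ)) h
    push_cast at this
    linarith
  · rw [if_neg hd] at h ⊢
    have : (maj (σ.insertIdx (j - 1) r) : ℤ) =
        (maj σ : ℤ) + (j - 1 : ℕ) + (dstat σ j : ℤ) := by exact_mod_cast congrArg (Nat.cast (R := ℤ)) h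
    have hc : ((j - 1 : ℕ) : ℤ) = (j : ℤ) - 1 := by omega
    rw [hc] at this
    linarith

lemma dstat_succ (σ : List ℤ) (k : ℕ) :
    dstat σ k = dstat σ (k + 1) + (if k ∈ descSet σ then 1 else 0) := by
  classical
  unfold dstat
  by_cases h : k ∈ descSet σ
  · rw [if_pos h]
    have : (descSet σ).filter (fun i => k ≤ i) =
        insert k ((descSet σ).filter (fun i => k + 1 ≤ i)) := by
      ext x
      simp only [Finset.mem_filter, Finset.mem_insert]
      constructor
      · rintro ⟨hx, hk⟩
        rcases eq_or_lt_of_le hk with h' | h'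
        · exact Or.inl h'.symm
        · exact Or.inr ⟨hx, h'⟩
      · rintro (rfl | ⟨hx, hk⟩)
        · exact ⟨h, le_refl _⟩
        · exact ⟨hx, by omega⟩
    rw [this, Finset.card_insert_of_notMem (by simp)]
  · rw [if_neg h, add_zero]
    congr 1
    ext x
    simp only [Finset.mem_filter]
    constructor
    · rintro ⟨hx, hk⟩
      refine ⟨hx, ?_⟩
      rcases eq_or_lt_of_le hk with h' | h'
      · exact absurd (h' ▸ hx) h
      · omega
    · rintro ⟨hx, hk⟩
      exact ⟨hx, by omega⟩

/-- If r is less than every letter of σ, then for 1 ≤ k ≤ n-1 the set of the first k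
entries of MIS(σ,r) is the integer interval {dₖ(σ), ..., dₖ(σ)+k-1}. -/
theorem mis_initial_segment_min (n : ℕ) (σ : List ℤ) (hnd : σ.Nodup)
    (hlen : σ.length + 1 = n) (r : ℤ) (hr : ∀ x ∈ σ, r < x)
    (k : ℕ) (hk1 : 1 ≤ k) (hk : k ≤ n - 1) :
    (Finset.Icc 1 k).image (fun j => mi σ j r) =
      Finset.Icc ((dstat σ k : ℤ)) ((dstat σ k : ℤ) + k - 1) := by
  have hkσ : k ≤ σ.length := by omega
  clear hk hlen hnd
  induction k with
  | zero => omega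
  | succ m ih =>
    by_cases hm : m = 0
    · subst hm
      rw [Finset.Icc_self, Finset.image_singleton]
      have h1 : mi σ 1 r = (dstat σ 1 : ℤ) := by
        rw [mi_formula σ r hr 1 le_rfl (by omega)]
        have h0 : (0 : ℕ) ∉ descSet σ := by
          simp [mem_descSet]
        simp [h0]
      rw [h1]
      norm_num
    · have ihm := ih (by omega) (by omega)
      have hIcc : Finset.Icc 1 (m + 1) = insert (m + 1) (Finset.Icc 1 m) := by
        ext x
        simp only [Finset.mem_Icc, Finset.mem_insert]
        omega
      rw [hIcc, Finset.image_insert, ihm]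
      have hmi : mi σ (m + 1) r =
          (dstat σ (m + 1) : ℤ) + (if m ∈ descSet σ then 0 else (m : ℤ)) := by
        rw [mi_formula σ r hr (m + 1) (by omega) hkσ]
        simp only [Nat.add_sub_cancel]
        push_cast
        ring_nf
      have hds := dstat_succ σ m
      by_cases hd : m ∈ descSet σ
      · rw [if_pos hd] at hds
        rw [hmi, if_pos hd, add_zero]
        have hc : (dstat σ m : ℤ) = (dstat σ (m + 1) : ℤ) + 1 := by exact_mod_cast hds
        ext x
        simp only [Finset.mem_insert, Finset.mem_Icc]
        push_cast
        omega
      · rw [if_neg hd, add_zero] at hds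
        rw [hmi, if_neg hd]
        have hc : (dstat σ m : ℤ) = (dstat σ (m + 1) : ℤ) := by exact_mod_cast hds
        ext x
        simp only [Finset.mem_insert, Finset.mem_Icc]
        push_cast
        omega
end
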